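/- Let k ≥ 1 and n, i be integers with 1 ≤ i ≤ n - k + 1. The number of gap-admissible subsets σ ⊆ {1,…,n-k+1} with |σ| = i (equivalently, the number of minimal generators of the i-fold lcm-ideal of the Cons/k-out-of-n:F failure ideal) equals N_{k,n,i} = (n-k-i+2) + Σ_{m=1}^{n-k-i+1} (n-k-i+2-m) · Σ_{a=1}^{i-1} C(i-1, i-1-a) · C(m-(k-1)a-1, a-1), where a binomial coefficient C(x,y) is taken to be 0 whenever x < 0 (in particular whenever m - (k-1)a - 1 < 0). -/

import Mathlib

/-- `suppK k σ = ⋃_{a ∈ σ} {a, a+1, …, a+k-1}`: the indices of the variables dividing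
the lcm of the consecutive generators `x_a ⋯ x_{a+k-1}`, `a ∈ σ`. -/
def suppK (k : ℕ) (σ : Finset ℕ) : Finset ℕ :=
  σ.biUnion fun a => Finset.Ico a (a + k)

/-- `a < b` are consecutive elements of `σ`: both lie in `σ` and no element of `σ`
lies strictly between them. -/
def ConsecutiveIn (σ : Finset ℕ) (a b : ℕ) : Prop :=
  a ∈ σ ∧ b ∈ σ ∧ a < b ∧ ∀ c ∈ σ, ¬(a < c ∧ c < b)

/-- `σ` is gap-admissible for `k`: every gap of `σ` (the size `b - a - 1 ≥ 1` for
consecutive elements `a < b`) has size at least `k`. -/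
def GapAdmissible (k : ℕ) (σ : Finset ℕ) : Prop :=
  ∀ a b : ℕ, ConsecutiveIn σ a b → b = a + 1 ∨ k ≤ b - a - 1


open Finset

/-- partial sum enumeration -/
def psFun (s : ℕ) (g : ℕ → ℕ) (t : ℕ) : ℕ := s + t + ∑ r ∈ Finset.range t, g r

lemma psFun_succ (s g t) : psFun s g (t+1) = psFun s g t + 1 + g t := by
  simp [psFun, Finset.sum_range_succ]; ring

lemma psFun_zero (s g) : psFun s g 0 = s := by simp [psFun]

lemma psFun_mono (s g) : StrictMono (psFun s g) :=
  strictMono_nat_of_lt_succ fun t => by rw [psFun_succ]; omega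

def Phi (j s : ℕ) (g : ℕ → ℕ) : Finset ℕ := (Finset.range (j+1)).image (psFun s g)

lemma mem_Phi {j s g x} : x ∈ Phi j s g ↔ ∃ t ≤ j, psFun s g t = x := by
  simp [Phi, Nat.lt_succ_iff]

lemma card_Phi (j s g) : (Phi j s g).card = j + 1 := by
  rw [Phi, Finset.card_image_of_injective _ (psFun_mono s g).injective, card_range]

lemma min'_Phi (j s g) (h : (Phi j s g).Nonempty) : (Phi j s g).min' h = s := by
  apply le_antisymm
  · exact Finset.min'_le _ _ (mem_Phi.2 ⟨0, Nat.zero_le _, psFun_zero s g⟩)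
  · apply Finset.le_min'
    intro y hy
    obtain ⟨t, _, rfl⟩ := mem_Phi.1 hy
    have := (psFun_mono s g).monotone (Nat.zero_le t)
    rw [psFun_zero] at this; exact this

lemma sup_Phi (j s g) : (Phi j s g).sup id = psFun s g j := by
  apply le_antisymm
  · apply Finset.sup_le
    intro y hy
    obtain ⟨t, ht, rfl⟩ := mem_Phi.1 hy
    exact (psFun_mono s g).monotone ht
  · exact Finset.le_sup (f := id) (mem_Phi.2 ⟨j, le_refl _, rfl⟩)

lemma consecutive_Phi {j s g a b} :
    ConsecutiveIn (Phi j s g) a b ↔ ∃ t < j, psFun s g t = a ∧ psFun s g (t+1) = b := by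
  constructor
  · rintro ⟨ha, hb, hab, hbet⟩
    obtain ⟨t, htj, rfl⟩ := mem_Phi.1 ha
    obtain ⟨u, huj, rfl⟩ := mem_Phi.1 hb
    have htu : t < u := (psFun_mono s g).lt_iff_lt.1 hab
    have : u = t + 1 := by
      by_contra hne
      exact hbet (psFun s g (t+1)) (mem_Phi.2 ⟨t+1, by omega, rfl⟩)
        ⟨(psFun_mono s g) (by omega), (psFun_mono s g) (by omega)⟩
    subst this
    exact ⟨t, by omega, rfl, rfl⟩
  · rintro ⟨t, htj, rfl, rfl⟩
    refine ⟨mem_Phi.2 ⟨t, by omega, rfl⟩, mem_Phi.2 ⟨t+1, by omega, rfl⟩,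
      (psFun_mono s g) (by omega), ?_⟩
    rintro c hc ⟨h1, h2⟩
    obtain ⟨r, hrj, rfl⟩ := mem_Phi.1 hc
    have := (psFun_mono s g).lt_iff_lt.1 h1
    have := (psFun_mono s g).lt_iff_lt.1 h2
    omega

lemma gapAdmissible_Phi {k j s g} (hg : ∀ t < j, g t = 0 ∨ k ≤ g t) :
    GapAdmissible k (Phi j s g) := by
  intro a b hcons
  obtain ⟨t, htj, rfl, rfl⟩ := consecutive_Phi.1 hcons
  rw [psFun_succ]
  rcases hg t htj with h | h
  · left; omega
  · right; omega

lemma gaps_of_gapAdmissible_Phi {k j s g} (hadm : GapAdmissible k (Phi j s g)) :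
    ∀ t < j, g t = 0 ∨ k ≤ g t := by
  intro t htj
  have := hadm (psFun s g t) (psFun s g (t+1)) (consecutive_Phi.2 ⟨t, htj, rfl, rfl⟩)
  rw [psFun_succ] at this
  omega

lemma psFun_congr {s g g' : _} (h : ∀ r < t, g r = g' r) : psFun s g t = psFun s g' t := by
  unfold psFun
  congr 1
  exact Finset.sum_congr rfl fun r hr => h r (Finset.mem_range.1 hr)

lemma exists_rep {j : ℕ} (σ : Finset ℕ) (h : σ.card = j + 1) :
    ∃ s g, (∀ t, j ≤ t → g t = 0) ∧ σ = Phi j s g := by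
  set f := σ.orderEmbOfFin h with hf
  set F : ℕ → ℕ := fun t => f ⟨min t j, by omega⟩ with hF
  have Fstep : ∀ t < j, F t < F (t + 1) := by
    intro t ht
    apply f.strictMono
    simp only [Fin.mk_lt_mk]
    omega
  refine ⟨F 0, fun r => F (r+1) - F r - 1, fun t ht => ?_, ?_⟩
  · have : F (t+1) = F t := by
      simp only [hF]
      congr 1
      exact Fin.ext (by simp; omega)
    show F (t+1) - F t - 1 = 0
    omega
  · have tele : ∀ t ≤ j, psFun (F 0) (fun r => F (r+1) - F r - 1) t = F t := by
      intro t
      induction t with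
      | zero => intro _; exact psFun_zero _ _
      | succ t ih =>
        intro ht
        rw [psFun_succ, ih (by omega)]
        have := Fstep t (by omega)
        omega
    ext x
    constructor
    · intro hx
      have : x ∈ Set.range f := by rw [Finset.range_orderEmbOfFin]; exact hx
      obtain ⟨u, rfl⟩ := this
      refine Finset.mem_image.2 ⟨u, Finset.mem_range.2 u.isLt, ?_⟩
      rw [tele u (by omega)]
      simp only [hF]
      congr 1
      exact Fin.ext (by simp; omega)
    · intro hx
      obtain ⟨t, ht, rfl⟩ := Finset.mem_image.1 hx
      rw [tele t (by rw [Finset.mem_range] at ht; omega)]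
      have : F t ∈ Set.range f := ⟨_, rfl⟩
      rwa [Finset.range_orderEmbOfFin] at this

lemma card_piAntidiag_univ (a s : ℕ) :
    (Finset.piAntidiag (Finset.univ : Finset (Fin a)) s).card = (a + s - 1).choose s := by
  rw [← Finset.map_sym_eq_piAntidiag, Finset.card_map, Finset.sym_univ, Finset.card_univ,
    Sym.card_sym_eq_choose, Fintype.card_fin]

/-- gap vectors of length j summing to m with entries 0 or ≥ k -/
def Gm (k j m : ℕ) : Finset (Fin j → ℕ) :=
  (Finset.piAntidiag Finset.univ m).filter (fun g => ∀ t, g t ≠ 0 → k ≤ g t)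

lemma mem_Gm {k j m} {g : Fin j → ℕ} :
    g ∈ Gm k j m ↔ (∑ t, g t = m) ∧ ∀ t, g t ≠ 0 → k ≤ g t := by
  simp [Gm, Finset.mem_piAntidiag]

lemma Gm_zero (k j : ℕ) : (Gm k j 0).card = 1 := by
  rw [Gm, Finset.piAntidiag_zero]
  rw [Finset.filter_singleton, if_pos (by simp)]
  simp

def fiberT (k j m : ℕ) (T : Finset (Fin j)) : Finset (Fin j → ℕ) :=
  (Gm k j m).filter (fun g => Finset.univ.filter (fun t => g t ≠ 0) = T)

lemma mem_fiberT {k j m T} {g : Fin j → ℕ} :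
    g ∈ fiberT k j m T ↔ g ∈ Gm k j m ∧ ∀ t, g t ≠ 0 ↔ t ∈ T := by
  simp only [fiberT, Finset.mem_filter, and_congr_right_iff]
  intro _
  rw [Finset.ext_iff]
  simp

/-- sum of a function over `Fin j` supported in `T`, reindexed through `T.equivFin`. -/
lemma sum_supported {j : ℕ} (T : Finset (Fin j)) (F : Fin j → ℕ)
    (hF : ∀ x ∉ T, F x = 0) :
    ∑ y : Fin T.card, F ((T.equivFin.symm y : T) : Fin j) = ∑ x, F x := by
  rw [← Finset.sum_subset (Finset.subset_univ T) (fun x _ hx => hF x hx),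
    ← Finset.sum_attach T F, ← Finset.univ_eq_attach,
    ← Equiv.sum_comp T.equivFin.symm (fun x : T => F (x : Fin j))]

lemma fiberT_card_of_le {k j m : ℕ} (hk : 1 ≤ k) (T : Finset (Fin j)) (hkm : k * T.card ≤ m) :
    (fiberT k j m T).card = (T.card + (m - k * T.card) - 1).choose (m - k * T.card) := by
  rw [← card_piAntidiag_univ]
  refine (Finset.card_bij
    (i := fun h _ => fun x : Fin j => if hx : x ∈ T then h (T.equivFin ⟨x, hx⟩) + k else 0)
    ?_ ?_ ?_).symm
  · -- maps into fiberT
    intro h hh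
    rw [Finset.mem_piAntidiag] at hh
    obtain ⟨hsum, -⟩ := hh
    rw [mem_fiberT]
    have hsum2 : ∑ x, (if hx : x ∈ T then h (T.equivFin ⟨x, hx⟩) + k else 0) = m := by
      rw [← sum_supported T _ (fun x hx => dif_neg hx)]
      have : ∀ y : Fin T.card,
          (if hx : ((T.equivFin.symm y : T) : Fin j) ∈ T
            then h (T.equivFin ⟨((T.equivFin.symm y : T) : Fin j), hx⟩) + k else 0)
          = h y + k := by
        intro y
        rw [dif_pos (T.equivFin.symm y).2]
        congr 2
        rw [show (⟨((T.equivFin.symm y : T) : Fin j), (T.equivFin.symm y).2⟩ : {x // x ∈ T})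
          = T.equivFin.symm y from Subtype.ext rfl, Equiv.apply_symm_apply]
      rw [Finset.sum_congr rfl (fun y _ => this y), Finset.sum_add_distrib, hsum,
        Finset.sum_const, Finset.card_univ, Fintype.card_fin, smul_eq_mul, mul_comm (T.card) k]
      omega
    refine ⟨mem_Gm.2 ⟨hsum2, ?_⟩, ?_⟩
    · intro t ht
      by_cases hx : t ∈ T
      · rw [dif_pos hx]; omega
      · rw [dif_neg hx] at ht; omega
    · intro t
      by_cases hx : t ∈ T
      · simp only [dif_pos hx]
        constructor
        · intro _; exact hx
        · intro _; omega
      · simp only [dif_neg hx]; simp [hx]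
  · -- injective
    intro h1 _ h2 _ heq
    funext y
    have := congrFun heq ((T.equivFin.symm y : T) : Fin j)
    rw [dif_pos (T.equivFin.symm y).2, dif_pos (T.equivFin.symm y).2,
      show (⟨((T.equivFin.symm y : T) : Fin j), (T.equivFin.symm y).2⟩ : {x // x ∈ T})
        = T.equivFin.symm y from Subtype.ext rfl, Equiv.apply_symm_apply] at this
    omega
  · -- surjective
    intro g hg
    rw [mem_fiberT] at hg
    obtain ⟨hgm, hsupp⟩ := hg
    rw [mem_Gm] at hgm
    obtain ⟨hsum, hge⟩ := hgm
    have hk' : ∀ y : Fin T.card, k ≤ g ((T.equivFin.symm y : T) : Fin j) :=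
      fun y => hge _ ((hsupp _).2 (T.equivFin.symm y).2)
    have hsg : ∑ y : Fin T.card, g ((T.equivFin.symm y : T) : Fin j) = m := by
      rw [sum_supported T g (fun x hx => by
        by_contra hne; exact hx ((hsupp x).1 hne)), hsum]
    have hsg2 : ∑ y : Fin T.card, (g ((T.equivFin.symm y : T) : Fin j) - k)
        = m - k * T.card := by
      have key : ∑ y : Fin T.card, (g ((T.equivFin.symm y : T) : Fin j) - k) + k * T.card
          = m := by
        rw [← hsg,
          show (∑ y : Fin T.card, g ((T.equivFin.symm y : T) : Fin j))
            = ∑ y : Fin T.card, ((g ((T.equivFin.symm y : T) : Fin j) - k) + k) from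
            Finset.sum_congr rfl fun y _ => (Nat.sub_add_cancel (hk' y)).symm,
          Finset.sum_add_distrib, Finset.sum_const, Finset.card_univ, Fintype.card_fin,
          smul_eq_mul, mul_comm k T.card]
      omega
    refine ⟨fun y => g ((T.equivFin.symm y : T) : Fin j) - k, ?_, ?_⟩
    · rw [Finset.mem_piAntidiag]
      exact ⟨hsg2, fun i _ => Finset.mem_univ i⟩
    · dsimp only
      funext x
      by_cases hx : x ∈ T
      · rw [dif_pos hx, show T.equivFin.symm (T.equivFin ⟨x, hx⟩) = ⟨x, hx⟩ from
          Equiv.symm_apply_apply _ _]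
        show g x - k + k = g x
        have := hge x ((hsupp x).2 hx)
        omega
      · rw [dif_neg hx]
        by_contra hne
        exact hx ((hsupp x).1 (Ne.symm hne))

def Hf (k m a : ℕ) : ℕ :=
  if a = 0 then 0
  else if (k-1)*a+1 ≤ m then (m - ((k-1)*a+1)).choose (a-1) else 0

lemma sub_one_mul' (k a : ℕ) : (k - 1) * a = k * a - a := by
  rw [Nat.sub_mul, one_mul]

lemma fiberT_card {k j m : ℕ} (hk : 1 ≤ k) (hm : 1 ≤ m) (T : Finset (Fin j)) :
    (fiberT k j m T).card = Hf k m T.card := by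
  rcases Nat.eq_zero_or_pos T.card with hT | hT
  · rw [Hf, if_pos hT, Finset.card_eq_zero]
    rw [Finset.eq_empty_iff_forall_notMem]
    intro g hg
    rw [mem_fiberT] at hg
    obtain ⟨hgm, hsupp⟩ := hg
    rw [Finset.card_eq_zero] at hT
    have : ∀ t, g t = 0 := by
      intro t
      by_contra hne
      have := (hsupp t).1 hne
      rw [hT] at this
      exact absurd this (Finset.notMem_empty t)
    have hs := (mem_Gm.1 hgm).1
    rw [Finset.sum_congr rfl (fun t _ => this t), Finset.sum_const_zero] at hs
    omega
  · have hsub := sub_one_mul' k T.card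
    have hTk : T.card ≤ k * T.card := Nat.le_mul_of_pos_left _ hk
    rcases le_or_gt (k * T.card) m with hkm | hkm
    · rw [fiberT_card_of_le hk T hkm, Hf, if_neg (by omega), if_pos (by omega)]
      have e1 : m - ((k-1)*T.card+1) = T.card + (m - k * T.card) - 1 := by omega
      rw [e1]
      have e2 : T.card - 1 = (T.card + (m - k * T.card) - 1) - (m - k * T.card) := by omega
      rw [e2, Nat.choose_symm (by omega)]
    · have hempty : (fiberT k j m T).card = 0 := by
        rw [Finset.card_eq_zero, Finset.eq_empty_iff_forall_notMem]
        intro g hg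
        rw [mem_fiberT] at hg
        obtain ⟨hgm, hsupp⟩ := hg
        obtain ⟨hsum, hge⟩ := mem_Gm.1 hgm
        have hbig : T.card * k ≤ ∑ x ∈ T, g x :=
          Finset.card_nsmul_le_sum T g k (fun x hx => hge x ((hsupp x).2 hx))
        have hle : ∑ x ∈ T, g x ≤ ∑ x, g x :=
          Finset.sum_le_sum_of_subset (Finset.subset_univ T)
        rw [hsum] at hle
        have : k * T.card = T.card * k := mul_comm _ _
        omega
      rw [hempty, Hf, if_neg (by omega)]
      rcases le_or_gt ((k-1)*T.card+1) m with hg | hg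
      · rw [if_pos hg, Nat.choose_eq_zero_of_lt (by omega)]
      · rw [if_neg (by omega)]

lemma Gm_card {k j m : ℕ} (hk : 1 ≤ k) (hm : 1 ≤ m) :
    (Gm k j m).card = ∑ a ∈ Finset.Icc 1 j, j.choose (j - a) *
      (if (k-1)*a+1 ≤ m then (m - ((k-1)*a+1)).choose (a-1) else 0) := by
  rw [Finset.card_eq_sum_card_fiberwise
    (f := fun g => Finset.univ.filter (fun t => g t ≠ 0))
    (t := Finset.univ.powerset)
    (by intro g _; exact Finset.mem_coe.2 (Finset.mem_powerset.2 (Finset.filter_subset _ _)))]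
  have step : ∀ T ∈ Finset.univ.powerset,
      ((Gm k j m).filter (fun g => Finset.univ.filter (fun t => g t ≠ 0) = T)).card
        = Hf k m T.card := fun T _ => fiberT_card hk hm T
  rw [Finset.sum_congr rfl step, Finset.sum_powerset_apply_card (f := Hf k m),
    Finset.card_univ, Fintype.card_fin]
  have : Finset.range (j + 1) = insert 0 (Finset.Icc 1 j) := by
    ext x; simp; omega
  rw [this, Finset.sum_insert (by simp), Hf, if_pos rfl, smul_zero, zero_add]
  apply Finset.sum_congr rfl
  intro a ha
  rw [Finset.mem_Icc] at ha
  rw [smul_eq_mul, Nat.choose_symm ha.2, Hf, if_neg (by omega)]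

/-- extension of a `Fin j`-tuple by zero -/
def extg {j : ℕ} (v : Fin j → ℕ) : ℕ → ℕ := fun r => if h : r < j then v ⟨r, h⟩ else 0

lemma sum_extg {j : ℕ} (v : Fin j → ℕ) : ∑ r ∈ Finset.range j, extg v r = ∑ t, v t := by
  rw [← Fin.sum_univ_eq_sum_range]
  exact Finset.sum_congr rfl fun t _ => by simp [extg, t.isLt]

open scoped Classical in
noncomputable def Afin (k N j : ℕ) : Finset (Finset ℕ) :=
  ((Finset.Icc 1 N).powerset).filter (fun σ => σ.card = j + 1 ∧ GapAdmissible k σ)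

lemma mem_Afin {k N j σ} :
    σ ∈ Afin k N j ↔ σ ⊆ Finset.Icc 1 N ∧ σ.card = j + 1 ∧ GapAdmissible k σ := by
  simp [Afin, Finset.mem_filter, Finset.mem_powerset, and_assoc]

/-- the total-gap statistic -/
def gfun (j : ℕ) (σ : Finset ℕ) : ℕ := σ.sup id - (σ.min.getD 0) - j

lemma minD_eq {σ : Finset ℕ} (h : σ.Nonempty) : σ.min.getD 0 = σ.min' h := by
  rw [← Finset.coe_min' h]; rfl

open scoped Classical in
lemma fiber_card (k N j m : ℕ) :
    ((Afin k N j).filter (fun σ => gfun j σ = m)).card = (N - j - m) * (Gm k j m).card := by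
  have hIcc : (N - j - m) = (Finset.Icc 1 (N - j - m)).card := by
    rw [Nat.card_Icc]; omega
  rw [hIcc, ← Finset.card_product]
  refine (Finset.card_bij
    (i := fun p _ => Phi j p.1 (extg p.2)) ?_ ?_ ?_).symm
  · -- maps into fiber
    rintro ⟨s, v⟩ hp
    rw [Finset.mem_product, Finset.mem_Icc, mem_Gm] at hp
    obtain ⟨⟨hs1, hs2⟩, hvm, hvk⟩ := hp
    dsimp only
    have hsupPhi : psFun s (extg v) j = s + j + m := by
      rw [psFun, sum_extg, hvm]
    have hne : (Phi j s (extg v)).Nonempty := by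
      rw [← Finset.card_pos, card_Phi]; omega
    rw [Finset.mem_filter, mem_Afin]
    refine ⟨⟨?_, card_Phi j s (extg v), gapAdmissible_Phi ?_⟩, ?_⟩
    · intro x hx
      obtain ⟨t, ht, rfl⟩ := mem_Phi.1 hx
      rw [Finset.mem_Icc]
      constructor
      · have := (psFun_mono s (extg v)).monotone (Nat.zero_le t)
        rw [psFun_zero] at this
        omega
      · have := (psFun_mono s (extg v)).monotone ht
        rw [hsupPhi] at this
        omega
    · intro t ht
      have e : extg v t = v ⟨t, ht⟩ := dif_pos ht
      rw [e]
      rcases Nat.eq_zero_or_pos (v ⟨t, ht⟩) with h | h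
      · left; exact h
      · right
        have hne0 : v ⟨t, ht⟩ ≠ 0 := by omega
        exact hvk _ hne0
    · rw [gfun, minD_eq hne, min'_Phi, sup_Phi, hsupPhi]
      omega
  · -- injective
    rintro ⟨s, v⟩ hp ⟨s', v'⟩ hp' heq
    dsimp only at heq
    have hne : (Phi j s (extg v)).Nonempty := by
      rw [← Finset.card_pos, card_Phi]; omega
    have hne' : (Phi j s' (extg v')).Nonempty := by
      rw [← Finset.card_pos, card_Phi]; omega
    have hs : s = s' := by
      have a1 : (Phi j s (extg v)).min.getD 0 = s := by
        rw [minD_eq hne, min'_Phi]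
      have a2 : (Phi j s' (extg v')).min.getD 0 = s' := by
        rw [minD_eq hne', min'_Phi]
      rw [← a1, ← a2, heq]
    have hkey : ∀ u : Fin (j+1), psFun s (extg v) u = psFun s' (extg v') u := by
      have hmono1 : StrictMono (fun u : Fin (j+1) => psFun s (extg v) u) :=
        fun a b hab => psFun_mono s (extg v) (by exact hab)
      have hmono2 : StrictMono (fun u : Fin (j+1) => psFun s' (extg v') u) :=
        fun a b hab => psFun_mono s' (extg v') (by exact hab)
      have e1 := Finset.orderEmbOfFin_unique (card_Phi j s (extg v))
        (f := fun u : Fin (j+1) => psFun s (extg v) u)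
        (fun u => mem_Phi.2 ⟨u, by omega, rfl⟩) hmono1
      have e2 := Finset.orderEmbOfFin_unique (card_Phi j s (extg v))
        (f := fun u : Fin (j+1) => psFun s' (extg v') u)
        (fun u => by
          have : psFun s' (extg v') u ∈ Phi j s' (extg v') := mem_Phi.2 ⟨u, by omega, rfl⟩
          rwa [← heq] at this)
        hmono2
      intro u
      rw [congrFun e1 u, congrFun e2 u]
    have hv : v = v' := by
      funext t
      have k1 := hkey ⟨t.val, by omega⟩
      have k2 := hkey ⟨t.val + 1, by omega⟩
      simp only at k1 k2
      rw [psFun_succ, psFun_succ] at k2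
      have ev : extg v t.val = v t := by rw [extg, dif_pos t.isLt]
      have ev' : extg v' t.val = v' t := by rw [extg, dif_pos t.isLt]
      rw [ev, ev'] at k2
      omega
    rw [Prod.ext_iff]
    exact ⟨hs, hv⟩
  · -- surjective
    intro σ hσ
    rw [Finset.mem_filter, mem_Afin] at hσ
    obtain ⟨⟨hsub, hcard, hadm⟩, hm⟩ := hσ
    obtain ⟨s, g, hg0, rfl⟩ := exists_rep σ hcard
    have hne : (Phi j s g).Nonempty := by
      rw [← Finset.card_pos, card_Phi]; omega
    have hs1 : 1 ≤ s := by
      have : s ∈ Phi j s g := mem_Phi.2 ⟨0, Nat.zero_le _, psFun_zero s g⟩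
      exact (Finset.mem_Icc.1 (hsub this)).1
    have hsN : psFun s g j ≤ N := by
      have : psFun s g j ∈ Phi j s g := mem_Phi.2 ⟨j, le_refl _, rfl⟩
      exact (Finset.mem_Icc.1 (hsub this)).2
    have hsum : ∑ r ∈ Finset.range j, g r = m := by
      rw [gfun, minD_eq hne, min'_Phi, sup_Phi, psFun] at hm
      omega
    have hPhieq : Phi j s (extg (fun t : Fin j => g t.val)) = Phi j s g := by
      unfold Phi
      apply Finset.image_congr
      intro t ht
      rw [Finset.coe_range, Set.mem_Iio] at ht
      exact psFun_congr fun r hr => by rw [extg, dif_pos (by omega)]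
    refine ⟨(s, fun t : Fin j => g t.val), ?_, hPhieq⟩
    rw [Finset.mem_product, Finset.mem_Icc, mem_Gm]
    have hpsj : psFun s g j = s + j + m := by rw [psFun, hsum]
    refine ⟨⟨hs1, by omega⟩, ?_, ?_⟩
    · rw [Fin.sum_univ_eq_sum_range, hsum]
    · intro t ht
      rcases gaps_of_gapAdmissible_Phi hadm t.val t.isLt with h | h
      · exact absurd h ht
      · exact h

open scoped Classical in
lemma Afin_card (k N j : ℕ) (hNj : j + 1 ≤ N) :
    (Afin k N j).card = ∑ m ∈ Finset.range (N - j), (N - j - m) * (Gm k j m).card := by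
  rw [Finset.card_eq_sum_card_fiberwise (f := gfun j) (t := Finset.range (N - j)) ?_]
  · exact Finset.sum_congr rfl fun m _ => fiber_card k N j m
  · intro σ hσ
    rw [Finset.mem_coe, mem_Afin] at hσ
    obtain ⟨hsub, hcard, -⟩ := hσ
    have hne : σ.Nonempty := Finset.card_pos.1 (by omega)
    have h1 : 1 ≤ σ.min' hne := (Finset.mem_Icc.1 (hsub (σ.min'_mem hne))).1
    have h2 : σ.sup id ≤ N := Finset.sup_le fun x hx => (Finset.mem_Icc.1 (hsub hx)).2
    rw [Finset.mem_coe, Finset.mem_range, gfun, minD_eq hne]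
    omega

/-- **Generator count for Cons/k-out-of-n:F.** For `k ≥ 1` and `1 ≤ i ≤ n - k + 1`, the
number of gap-admissible subsets `σ ⊆ {1,…,n-k+1}` with `|σ| = i` (the number of minimal
generators of the `i`-fold lcm-ideal) equals
`N_{k,n,i} = (n-k-i+2) + Σ_{m=1}^{n-k-i+1} (n-k-i+2-m) Σ_{a=1}^{i-1} C(i-1,i-1-a) C(m-(k-1)a-1,a-1)`,
where `C(x,y) = 0` whenever `x < 0` (encoded by the `if`-guard `(k-1)a + 1 ≤ m`). -/
theorem count_gapAdmissible (k n i : ℕ) (hk : 1 ≤ k) (hi1 : 1 ≤ i)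
    (hi2 : i ≤ n - k + 1) :
    {σ : Finset ℕ | σ ⊆ Finset.Icc 1 (n - k + 1) ∧ σ.card = i ∧
        GapAdmissible k σ}.ncard =
      (n - k + 2 - i) +
        ∑ m ∈ Finset.Icc 1 (n - k + 1 - i), (n - k + 2 - i - m) *
          ∑ a ∈ Finset.Icc 1 (i - 1), (i - 1).choose (i - 1 - a) *
            (if (k - 1) * a + 1 ≤ m then (m - ((k - 1) * a + 1)).choose (a - 1) else 0) := by
  obtain ⟨j, rfl⟩ : ∃ j, i = j + 1 := ⟨i - 1, by omega⟩
  set N := n - k + 1 with hN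
  have hNj : j + 1 ≤ N := hi2
  have hset : {σ : Finset ℕ | σ ⊆ Finset.Icc 1 N ∧ σ.card = j + 1 ∧ GapAdmissible k σ}
      = ↑(Afin k N j) := by
    ext σ
    simp [mem_Afin]
  rw [hset, Set.ncard_coe_finset, Afin_card k N j hNj]
  have hsplit : Finset.range (N - j) = insert 0 (Finset.Icc 1 (N - j - 1)) := by
    ext x
    simp only [Finset.mem_range, Finset.mem_insert, Finset.mem_Icc]
    omega
  rw [hsplit, Finset.sum_insert (by simp), Nat.sub_zero, Gm_zero, mul_one]
  have e1 : n - k + 2 - (j + 1) = N - j := by omega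
  have e2 : n - k + 1 - (j + 1) = N - j - 1 := by omega
  rw [e1, e2]
  congr 1
  apply Finset.sum_congr rfl
  intro m hm
  rw [Finset.mem_Icc] at hm
  rw [Gm_card hk hm.1]
  simp only [Nat.add_sub_cancel]
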